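/- Let X and Y be two independent strictly positive random variables, and let α > 0. Assume that lim_{t→∞} log ℙ(X > t)/log t = −α and that limsup_{t→∞} log ℙ(Y > t)/log t ≤ −α. Then lim_{t→∞} log ℙ(XY > t)/log t = −α. -/

import Mathlib

open MeasureTheory Filter ProbabilityTheory

open Set in
lemma tail_rpow_bound (f : ℝ → ℝ) (hf0 : ∀ s, 0 ≤ f s) (c : ℝ)
    (h : ∀ᶠ s in atTop, Real.log (f s) / Real.log s < c) :
    ∀ᶠ s in atTop, f s ≤ s ^ c := by
  filter_upwards [h, eventually_gt_atTop 1] with s hs hs1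
  rcases eq_or_lt_of_le (hf0 s) with h0 | h0
  · rw [← h0]; positivity
  · have hlogs : 0 < Real.log s := Real.log_pos hs1
    have h2 : Real.log (f s) < c * Real.log s := by
      rw [div_lt_iff₀ hlogs] at hs; linarith
    calc f s = Real.exp (Real.log (f s)) := (Real.exp_log h0).symm
    _ ≤ Real.exp (Real.log s * c) := by apply Real.exp_le_exp.mpr; linarith
    _ = s ^ c := (Real.rpow_def_of_pos (lt_trans one_pos hs1) c).symm

open Set in
lemma main_aux (f g h : ℝ → ℝ)
    (hf0 : ∀ s, 0 ≤ f s) (hf1 : ∀ s, f s ≤ 1)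
    (hg0 : ∀ s, 0 ≤ g s) (hg1 : ∀ s, g s ≤ 1)
    (c : ℝ) (hc0 : 0 < c) (hgc : 0 < g c)
    (hlow : ∀ t : ℝ, 0 < t → f (t/c) * g c ≤ h t)
    (hup : ∀ n : ℕ, 2 ≤ n → ∀ t : ℝ, 1 < t →
      h t ≤ f t + g t + ∑ i ∈ Finset.range n, f (t ^ (1 - ((i:ℝ)+1)/n)) * g (t ^ ((i:ℝ)/n)))
    (α : ℝ) (hα : 0 < α)
    (hX : Tendsto (fun t : ℝ => Real.log (f t) / Real.log t) atTop (nhds (-α)))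
    (hY : limsup (fun t : ℝ => Real.log (g t) / Real.log t) atTop ≤ -α) :
    Tendsto (fun t : ℝ => Real.log (h t) / Real.log t) atTop (nhds (-α)) := by
  have hfposev : ∀ᶠ s in atTop, 0 < f s := by
    have h1 : ∀ᶠ s in atTop, Real.log (f s) / Real.log s < -(α/2) :=
      hX.eventually_lt_const (by linarith)
    filter_upwards [h1, eventually_gt_atTop 1] with s hs hs1
    rcases (hf0 s).lt_or_eq with h0 | h0
    · exact h0
    · exfalso; rw [← h0, Real.log_zero, zero_div] at hs; linarith
  have htc : Tendsto (fun t : ℝ => t / c) atTop atTop := tendsto_id.atTop_div_const hc0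
  have hposev : ∀ᶠ t in atTop, 0 < h t := by
    filter_upwards [htc.eventually hfposev, eventually_gt_atTop 0] with t h1 h2
    exact lt_of_lt_of_le (mul_pos h1 hgc) (hlow t h2)
  -- lower bound: the comparison function tends to -α
  have hT2 : Tendsto (fun t : ℝ => Real.log (g c) / Real.log t) atTop (nhds 0) :=
    tendsto_const_nhds.div_atTop Real.tendsto_log_atTop
  have hTlow : Tendsto (fun t : ℝ => (Real.log (f (t/c)) + Real.log (g c)) / Real.log t)
      atTop (nhds (-α)) := by
    have hA : Tendsto (fun t : ℝ => Real.log (f (t/c)) / Real.log (t/c)) atTop (nhds (-α)) :=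
      hX.comp htc
    have hB : Tendsto (fun t : ℝ => Real.log (t/c) / Real.log t) atTop (nhds 1) := by
      have h1 : Tendsto (fun t : ℝ => 1 - Real.log c / Real.log t) atTop (nhds 1) := by
        have h2 := (tendsto_const_nhds (x := Real.log c)).div_atTop Real.tendsto_log_atTop
        simpa using (tendsto_const_nhds (x := (1:ℝ))).sub h2
      apply h1.congr'
      filter_upwards [eventually_gt_atTop (max 1 c), eventually_gt_atTop 0] with t ht ht0
      have hlt : 0 < Real.log t := Real.log_pos (lt_of_le_of_lt (le_max_left _ _) ht)
      rw [Real.log_div (ne_of_gt ht0) (ne_of_gt hc0), sub_div, div_self (ne_of_gt hlt)]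
    have hC : Tendsto (fun t : ℝ => Real.log (f (t/c)) / Real.log t) atTop (nhds (-α)) := by
      have h3 := hA.mul hB
      rw [mul_one] at h3
      apply h3.congr'
      filter_upwards [htc.eventually (eventually_gt_atTop 1), eventually_gt_atTop 1]
        with t ht ht1
      have hne : Real.log (t/c) ≠ 0 := ne_of_gt (Real.log_pos ht)
      have hne2 : Real.log t ≠ 0 := ne_of_gt (Real.log_pos ht1)
      field_simp
    have h4 := hC.add hT2
    rw [add_zero] at h4
    apply h4.congr
    intro t
    rw [add_div]
  -- lower bound : eventually ratio of h at least comparison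
  have hlow_ratio : ∀ᶠ t in atTop,
      (Real.log (f (t/c)) + Real.log (g c)) / Real.log t ≤ Real.log (h t) / Real.log t := by
    filter_upwards [htc.eventually hfposev, eventually_gt_atTop 1] with t h1 ht
    have ht0 : (0:ℝ) < t := lt_trans one_pos ht
    have hm : 0 < f (t/c) * g c := mul_pos h1 hgc
    have hlog : Real.log (f (t/c) * g c) ≤ Real.log (h t) := Real.log_le_log hm (hlow t ht0)
    rw [Real.log_mul (ne_of_gt h1) (ne_of_gt hgc)] at hlog
    exact (div_le_div_iff_of_pos_right (Real.log_pos ht)).mpr hlog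
  -- upper bound
  have hupper : ∀ ε : ℝ, 0 < ε → ∀ᶠ t in atTop, Real.log (h t) / Real.log t < -α + ε := by
    intro ε hε
    set δ := min (ε/4) (α/2) with hδdef
    have hδ0 : 0 < δ := lt_min (by linarith) (by linarith)
    have hδε : δ ≤ ε/4 := min_le_left _ _
    have hδα : δ ≤ α/2 := min_le_right _ _
    obtain ⟨n, hn2, hnα⟩ : ∃ n : ℕ, 2 ≤ n ∧ α / n ≤ ε/4 := by
      obtain ⟨m, hm⟩ := exists_nat_ge (4*α/ε)
      refine ⟨m + 2, by omega, ?_⟩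
      have hm2 : (4*α/ε) ≤ (m:ℝ) + 2 := by push_cast; linarith
      have hm3 : 4*α ≤ ((m:ℝ)+2) * ε := by
        have := (div_le_iff₀ hε).mp hm2
        linarith
      rw [div_le_div_iff₀ (by positivity) (by norm_num : (0:ℝ) < 4)]
      push_cast
      nlinarith
    have hn0 : (0:ℝ) < (n:ℝ) := by exact_mod_cast (by omega : 0 < n)
    set β := (1 - 1/(n:ℝ)) * (-α + δ) with hβdef
    have hβeq : β = -α + δ + α/(n:ℝ) - δ/(n:ℝ) := by rw [hβdef]; field_simp; ring
    have hβle : β ≤ -α + ε/2 := by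
      have hδn : 0 ≤ δ/(n:ℝ) := by positivity
      linarith
    have hβge : -α + δ ≤ β := by
      have h1 : 0 ≤ (α - δ)/(n:ℝ) := by
        apply div_nonneg _ hn0.le; linarith
      have h2 : β = (-α + δ) + (α - δ)/(n:ℝ) := by rw [hβeq]; ring
      linarith
    have hfb : ∀ᶠ s in atTop, f s ≤ s ^ (-α + δ) :=
      tail_rpow_bound f hf0 _ (hX.eventually_lt_const (by linarith))
    have hgb : ∀ᶠ s in atTop, g s ≤ s ^ (-α + δ) := by
      apply tail_rpow_bound g hg0
      have hbdd : IsBoundedUnder (· ≤ ·) atTop (fun t : ℝ => Real.log (g t) / Real.log t) := by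
        apply isBoundedUnder_of_eventually_le (a := (0:ℝ))
        filter_upwards [eventually_gt_atTop 1] with s hs
        exact div_nonpos_of_nonpos_of_nonneg (Real.log_nonpos (hg0 s) (hg1 s))
          (Real.log_nonneg hs.le)
      exact eventually_lt_of_limsup_lt (lt_of_le_of_lt hY (by linarith)) hbdd
    obtain ⟨M₁, hM₁⟩ := eventually_atTop.mp hfb
    obtain ⟨M₂, hM₂⟩ := eventually_atTop.mp hgb
    set M := max (max M₁ M₂) 1 with hMdef
    have hkey : ∀ᶠ t in atTop, ∀ q : ℝ, 1/(n:ℝ) ≤ q → M ≤ t ^ q := by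
      filter_upwards [(tendsto_rpow_atTop (by positivity : (0:ℝ) < 1/(n:ℝ))).eventually_ge_atTop M,
        eventually_ge_atTop 1] with t h1 ht1 q hq1
      exact le_trans h1 (Real.rpow_le_rpow_of_exponent_le ht1 hq1)
    have hht : ∀ᶠ t in atTop, h t ≤ ((n:ℝ) + 2) * t ^ β := by
      filter_upwards [hkey, eventually_gt_atTop 1] with t hkt ht1
      have ht0 : (0:ℝ) < t := lt_trans one_pos ht1
      have hfq : ∀ q : ℝ, q = 0 ∨ 1/(n:ℝ) ≤ q → f (t ^ q) ≤ t ^ (q * (-α + δ)) := by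
        intro q hq
        rcases hq with hq | hq1
        · subst hq; simpa [Real.rpow_zero] using hf1 1
        · have hM := hkt q hq1
          have hb := hM₁ (t ^ q) (le_trans (le_trans (le_max_left _ _) (le_max_left _ _)) hM)
          rw [Real.rpow_mul ht0.le]
          exact hb
      have hgq : ∀ q : ℝ, q = 0 ∨ 1/(n:ℝ) ≤ q → g (t ^ q) ≤ t ^ (q * (-α + δ)) := by
        intro q hq
        rcases hq with hq | hq1
        · subst hq; simpa [Real.rpow_zero] using hg1 1
        · have hM := hkt q hq1
          have hb := hM₂ (t ^ q) (le_trans (le_trans (le_max_right _ _) (le_max_left _ _)) hM)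
          rw [Real.rpow_mul ht0.le]
          exact hb
      have hterm : ∀ i ∈ Finset.range n, f (t ^ (1 - ((i:ℝ)+1)/(n:ℝ))) * g (t ^ ((i:ℝ)/(n:ℝ))) ≤ t ^ β := by
        intro i hi
        rw [Finset.mem_range] at hi
        have hq12 : (1 - ((i:ℝ)+1)/(n:ℝ)) + (i:ℝ)/(n:ℝ) = 1 - 1/(n:ℝ) := by
          field_simp
          ring
        have hf' : f (t ^ (1 - ((i:ℝ)+1)/(n:ℝ))) ≤ t ^ ((1 - ((i:ℝ)+1)/(n:ℝ)) * (-α + δ)) := by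
          apply hfq
          by_cases hi' : i = n - 1
          · left
            have hc1 : ((i:ℝ)+1) = (n:ℝ) := by
              rw [hi', Nat.cast_sub (by omega : 1 ≤ n)]; ring
            rw [hc1, div_self (ne_of_gt hn0)]; ring
          · right
            have hc2 : (i:ℝ) + 2 ≤ (n:ℝ) := by exact_mod_cast (by omega : i + 2 ≤ n)
            rw [le_sub_iff_add_le, ← add_div, div_le_one hn0]
            linarith
        have hg' : g (t ^ ((i:ℝ)/(n:ℝ))) ≤ t ^ (((i:ℝ)/(n:ℝ)) * (-α + δ)) := by
          apply hgq
          by_cases hi' : i = 0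
          · left; rw [hi']; simp
          · right
            have h1i : (1:ℝ) ≤ (i:ℝ) := by exact_mod_cast (by omega : 1 ≤ i)
            gcongr
        calc f (t ^ (1 - ((i:ℝ)+1)/(n:ℝ))) * g (t ^ ((i:ℝ)/(n:ℝ)))
            ≤ t ^ ((1 - ((i:ℝ)+1)/(n:ℝ)) * (-α + δ)) * t ^ (((i:ℝ)/(n:ℝ)) * (-α + δ)) :=
              mul_le_mul hf' hg' (hg0 _) (by positivity)
        _ = t ^ (((1 - ((i:ℝ)+1)/(n:ℝ)) + (i:ℝ)/(n:ℝ)) * (-α + δ)) := by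
              rw [← Real.rpow_add ht0, ← add_mul]
        _ = t ^ β := by rw [hq12]
      have hft : f t ≤ t ^ β := by
        have h1 : M ≤ t := by
          have := hkt 1 (by rw [div_le_one hn0]; exact_mod_cast (by omega : 1 ≤ n))
          rwa [Real.rpow_one] at this
        have h2 : f t ≤ t ^ (-α + δ) :=
          hM₁ t (le_trans (le_trans (le_max_left _ _) (le_max_left _ _)) h1)
        exact le_trans h2 (Real.rpow_le_rpow_of_exponent_le ht1.le hβge)
      have hgt : g t ≤ t ^ β := by
        have h1 : M ≤ t := by
          have := hkt 1 (by rw [div_le_one hn0]; exact_mod_cast (by omega : 1 ≤ n))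
          rwa [Real.rpow_one] at this
        have h2 : g t ≤ t ^ (-α + δ) :=
          hM₂ t (le_trans (le_trans (le_max_right _ _) (le_max_left _ _)) h1)
        exact le_trans h2 (Real.rpow_le_rpow_of_exponent_le ht1.le hβge)
      calc h t ≤ f t + g t + ∑ i ∈ Finset.range n, f (t ^ (1 - ((i:ℝ)+1)/(n:ℝ))) * g (t ^ ((i:ℝ)/(n:ℝ))) :=
            hup n hn2 t ht1
      _ ≤ t ^ β + t ^ β + ∑ i ∈ Finset.range n, t ^ β :=
            add_le_add (add_le_add hft hgt) (Finset.sum_le_sum hterm)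
      _ = ((n:ℝ) + 2) * t ^ β := by
            rw [Finset.sum_const, Finset.card_range, nsmul_eq_mul]; ring
    have hlogn : Tendsto (fun t : ℝ => Real.log ((n:ℝ)+2) / Real.log t) atTop (nhds 0) :=
      tendsto_const_nhds.div_atTop Real.tendsto_log_atTop
    filter_upwards [hht, hposev, eventually_gt_atTop 1,
      hlogn.eventually_lt_const (show (0:ℝ) < ε/4 by linarith)] with t h1 h2 h3 h4
    have hlt : 0 < Real.log t := Real.log_pos h3
    have ht0 : (0:ℝ) < t := lt_trans one_pos h3
    have hlog : Real.log (h t) ≤ Real.log ((n:ℝ)+2) + β * Real.log t := by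
      have h5 := Real.log_le_log h2 h1
      rwa [Real.log_mul (by positivity) (ne_of_gt (Real.rpow_pos_of_pos ht0 β)),
        Real.log_rpow ht0] at h5
    have h6 : Real.log (h t) / Real.log t ≤ Real.log ((n:ℝ)+2) / Real.log t + β := by
      calc Real.log (h t) / Real.log t
          ≤ (Real.log ((n:ℝ)+2) + β * Real.log t) / Real.log t := by gcongr
      _ = Real.log ((n:ℝ)+2) / Real.log t + β := by field_simp
    linarith
  -- conclusion
  rw [Metric.tendsto_nhds]
  intro ε hε
  have hlo' : ∀ᶠ t in atTop, -α - ε < Real.log (h t) / Real.log t := by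
    filter_upwards [hlow_ratio, hTlow.eventually_const_lt (show -α - ε < -α by linarith)]
      with t h1 h2
    linarith
  filter_upwards [hupper ε hε, hlo'] with t h1 h2
  rw [Real.dist_eq, abs_lt]
  constructor <;> linarith

-- the inclusion lemma
open Set in
lemma prod_tail_subset {Ω : Type*} (X Y : Ω → ℝ) (hXpos : ∀ ω, 0 < X ω) (hYpos : ∀ ω, 0 < Y ω)
    (n : ℕ) (hn : 2 ≤ n) (t : ℝ) (ht : 1 < t) :
    {ω | X ω * Y ω > t} ⊆ ({ω | X ω > t} ∪ {ω | Y ω > t}) ∪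
      ⋃ i ∈ Finset.range n,
        ({ω | X ω > t ^ (1 - ((i:ℝ)+1)/n)} ∩ {ω | Y ω > t ^ ((i:ℝ)/n)}) := by
  classical
  have ht0 : (0:ℝ) < t := lt_trans one_pos ht
  intro ω hω
  simp only [mem_setOf_eq] at hω
  by_cases hYt : t < Y ω
  · exact Or.inl (Or.inr hYt)
  push_neg at hYt
  by_cases hY1 : Y ω ≤ 1
  · refine Or.inl (Or.inl ?_)
    have : X ω * Y ω ≤ X ω := by
      nlinarith [hXpos ω]
    simp only [mem_setOf_eq]; linarith
  push_neg at hY1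
  right
  set Pr : ℕ → Prop := fun i => t ^ ((i:ℝ)/n) < Y ω with hPr
  have hP0 : Pr 0 := by simp [Pr, Real.rpow_zero, hY1]
  set i := Nat.findGreatest Pr (n-1) with hi
  have hispec : Pr i := Nat.findGreatest_spec (Nat.zero_le _) hP0
  have hile : i ≤ n - 1 := Nat.findGreatest_le _
  have hile' : i < n := lt_of_le_of_lt hile (Nat.sub_lt (by omega) one_pos)
  have hupper : Y ω ≤ t ^ (((i:ℝ)+1)/n) := by
    by_cases hc : i + 1 ≤ n - 1
    · have := Nat.findGreatest_is_greatest (P := Pr) (n := n-1) (k := i+1) (by omega) hc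
      rw [hPr] at this
      push_neg at this
      simpa using this
    · have hieq : i = n - 1 := by omega
      have hc1 : ((i:ℝ)+1) = (n:ℝ) := by
        rw [hieq, Nat.cast_sub (by omega : 1 ≤ n)]; ring
      have h1 : ((i:ℝ)+1)/n = 1 := by
        rw [hc1, div_self (Nat.cast_ne_zero.mpr (by omega : n ≠ 0))]
      rw [h1, Real.rpow_one]; exact hYt
  refine mem_iUnion₂.mpr ⟨i, Finset.mem_range.mpr hile', ?_, hispec⟩
  simp only [mem_setOf_eq]
  have hYp := hYpos ω
  have h1 : t / Y ω < X ω := (div_lt_iff₀ hYp).mpr (by linarith [mul_comm (X ω) (Y ω)])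
  have h2 : t ^ (1 - ((i:ℝ)+1)/n) = t / t ^ (((i:ℝ)+1)/n) := by
    rw [Real.rpow_sub ht0, Real.rpow_one]
  rw [h2]
  have h3 : t / t ^ (((i:ℝ)+1)/n) ≤ t / Y ω := by
    apply div_le_div_of_nonneg_left (le_of_lt ht0) hYp hupper |>.trans_eq rfl
  linarith


/-- **Lemma (product of heavy-tailed independent variables).**
Let `X` and `Y` be two independent strictly positive random variables and `α > 0`.
If `P(X > t) = t^{-α+o(1)}` and `P(Y > t) ≤ t^{-α+o(1)}` as `t → ∞`, then
`P(XY > t) = t^{-α+o(1)}` as `t → ∞`. -/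
theorem product_of_heavy_tails
    {Ω : Type*} [MeasurableSpace Ω] (P : Measure Ω) [IsProbabilityMeasure P]
    (X Y : Ω → ℝ) (hXmeas : Measurable X) (hYmeas : Measurable Y)
    (hXpos : ∀ ω, 0 < X ω) (hYpos : ∀ ω, 0 < Y ω)
    (hindep : IndepFun X Y P)
    (α : ℝ) (hα : 0 < α)
    (hX : Tendsto (fun t : ℝ => Real.log (P {ω | X ω > t}).toReal / Real.log t)
      atTop (nhds (-α)))
    (hY : limsup (fun t : ℝ => Real.log (P {ω | Y ω > t}).toReal / Real.log t) atTop ≤ -α) :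
    Tendsto (fun t : ℝ => Real.log (P {ω | X ω * Y ω > t}).toReal / Real.log t)
      atTop (nhds (-α)) := by
  classical
  have hone : ∀ A : Set Ω, (P A).toReal ≤ 1 := fun A =>
    le_trans (ENNReal.toReal_mono ENNReal.one_ne_top prob_le_one) (by simp)
  have hprod : ∀ a b : ℝ, P ({ω | X ω > a} ∩ {ω | Y ω > b})
      = P {ω | X ω > a} * P {ω | Y ω > b} := by
    intro a b
    have := hindep.measure_inter_preimage_eq_mul (Set.Ioi a) (Set.Ioi b)
      measurableSet_Ioi measurableSet_Ioi
    simpa [Set.preimage, Set.mem_Ioi] using this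
  obtain ⟨c, hc0, hgc⟩ : ∃ c : ℝ, 0 < c ∧ 0 < (P {ω | Y ω > c}).toReal := by
    by_contra hcon
    push_neg at hcon
    have hnull : ∀ n : ℕ, P {ω | Y ω > 1/((n:ℝ)+1)} = 0 := by
      intro n
      have h1 : (0:ℝ) < 1/((n:ℝ)+1) := by positivity
      have h2 := hcon _ h1
      have h3 : (P {ω | Y ω > 1/((n:ℝ)+1)}).toReal = 0 := le_antisymm h2 ENNReal.toReal_nonneg
      exact ((ENNReal.toReal_eq_zero_iff _).mp h3).resolve_right (measure_ne_top P _)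
    have hsub : (Set.univ : Set Ω) ⊆ ⋃ n : ℕ, {ω | Y ω > 1/((n:ℝ)+1)} := by
      intro ω _
      obtain ⟨n, hn⟩ := exists_nat_gt (1 / Y ω)
      refine Set.mem_iUnion.mpr ⟨n, ?_⟩
      have hYp := hYpos ω
      simp only [Set.mem_setOf_eq, gt_iff_lt]
      rw [div_lt_iff₀ (by positivity)]
      rw [div_lt_iff₀ hYp] at hn
      nlinarith
    have h0 : P (Set.univ : Set Ω) = 0 :=
      measure_mono_null hsub (measure_iUnion_null hnull)
    rw [measure_univ] at h0
    exact one_ne_zero h0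
  have hlow : ∀ t : ℝ, 0 < t →
      (P {ω | X ω > t/c}).toReal * (P {ω | Y ω > c}).toReal
        ≤ (P {ω | X ω * Y ω > t}).toReal := by
    intro t ht
    have hsub : {ω | X ω > t/c} ∩ {ω | Y ω > c} ⊆ {ω | X ω * Y ω > t} := by
      rintro ω ⟨h1, h2⟩
      simp only [Set.mem_setOf_eq, gt_iff_lt] at *
      have h3 : (t/c) * c < X ω * Y ω := mul_lt_mul'' h1 h2 (by positivity) hc0.le
      rwa [div_mul_cancel₀ _ (ne_of_gt hc0)] at h3
    calc (P {ω | X ω > t/c}).toReal * (P {ω | Y ω > c}).toReal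
        = (P ({ω | X ω > t/c} ∩ {ω | Y ω > c})).toReal := by
          rw [hprod, ENNReal.toReal_mul]
    _ ≤ _ := ENNReal.toReal_mono (measure_ne_top P _) (measure_mono hsub)
  have hup : ∀ n : ℕ, 2 ≤ n → ∀ t : ℝ, 1 < t →
      (P {ω | X ω * Y ω > t}).toReal ≤ (P {ω | X ω > t}).toReal + (P {ω | Y ω > t}).toReal
        + ∑ i ∈ Finset.range n,
            (P {ω | X ω > t ^ (1 - ((i:ℝ)+1)/(n:ℝ))}).toReal
              * (P {ω | Y ω > t ^ ((i:ℝ)/(n:ℝ))}).toReal := by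
    intro n hn t ht
    have hsub := prod_tail_subset X Y hXpos hYpos n hn t ht
    have hmeas : P {ω | X ω * Y ω > t} ≤ (P {ω | X ω > t} + P {ω | Y ω > t})
        + ∑ i ∈ Finset.range n,
            P {ω | X ω > t ^ (1 - ((i:ℝ)+1)/(n:ℝ))} * P {ω | Y ω > t ^ ((i:ℝ)/(n:ℝ))} := by
      calc P {ω | X ω * Y ω > t} ≤ P (({ω | X ω > t} ∪ {ω | Y ω > t}) ∪
            ⋃ i ∈ Finset.range n, ({ω | X ω > t ^ (1 - ((i:ℝ)+1)/(n:ℝ))}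
              ∩ {ω | Y ω > t ^ ((i:ℝ)/(n:ℝ))})) := measure_mono hsub
      _ ≤ P ({ω | X ω > t} ∪ {ω | Y ω > t}) + P (⋃ i ∈ Finset.range n,
            ({ω | X ω > t ^ (1 - ((i:ℝ)+1)/(n:ℝ))} ∩ {ω | Y ω > t ^ ((i:ℝ)/(n:ℝ))})) :=
            measure_union_le _ _
      _ ≤ (P {ω | X ω > t} + P {ω | Y ω > t}) + ∑ i ∈ Finset.range n,
            P ({ω | X ω > t ^ (1 - ((i:ℝ)+1)/(n:ℝ))} ∩ {ω | Y ω > t ^ ((i:ℝ)/(n:ℝ))}) :=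
            add_le_add (measure_union_le _ _) (measure_biUnion_finset_le _ _)
      _ = _ := by
            congr 1
            exact Finset.sum_congr rfl fun i _ => hprod _ _
    have hSne : (∑ i ∈ Finset.range n,
        P {ω | X ω > t ^ (1 - ((i:ℝ)+1)/(n:ℝ))} * P {ω | Y ω > t ^ ((i:ℝ)/(n:ℝ))}) ≠ ⊤ := by
      refine (ENNReal.sum_lt_top.mpr fun i _ => ?_).ne
      exact ENNReal.mul_lt_top (measure_lt_top P _) (measure_lt_top P _)
    have hRne : (P {ω | X ω > t} + P {ω | Y ω > t}) + ∑ i ∈ Finset.range n,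
        P {ω | X ω > t ^ (1 - ((i:ℝ)+1)/(n:ℝ))} * P {ω | Y ω > t ^ ((i:ℝ)/(n:ℝ))} ≠ ⊤ :=
      ENNReal.add_ne_top.mpr ⟨ENNReal.add_ne_top.mpr
        ⟨measure_ne_top P _, measure_ne_top P _⟩, hSne⟩
    have hres := ENNReal.toReal_mono hRne hmeas
    rw [ENNReal.toReal_add (ENNReal.add_ne_top.mpr ⟨measure_ne_top P _, measure_ne_top P _⟩) hSne,
      ENNReal.toReal_add (measure_ne_top P _) (measure_ne_top P _),
      ENNReal.toReal_sum (fun i _ => ENNReal.mul_ne_top (measure_ne_top P _) (measure_ne_top P _))]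
      at hres
    simpa [ENNReal.toReal_mul] using hres
  exact main_aux (fun s => (P {ω | X ω > s}).toReal) (fun s => (P {ω | Y ω > s}).toReal)
    (fun s => (P {ω | X ω * Y ω > s}).toReal) (fun s => ENNReal.toReal_nonneg) (fun s => hone _)
    (fun s => ENNReal.toReal_nonneg) (fun s => hone _)
    c hc0 hgc hlow hup α hα hX hY
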